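/- Let c > 0 and suppose D_i ⊂ ℝⁿ are bounded measurable sets each satisfying |B_r(x) ∩ D_i| > c rⁿ for all x ∈ ∂D_i and 0 < r < diam(D_i), and χ_{D_i} → χ_D in L¹(ℝⁿ). Then, after modifying D on a set of measure zero (using the normalized representative whose boundary equals the support of its Gauss–Green measure), D satisfies |B_r(x) ∩ D| ≥ c rⁿ for all x ∈ ∂D and 0 < r < diam(D). -/

import Mathlib

open MeasureTheory Metric Set Filter
open scoped ENNReal Topology

/-- A ball that meets both a set and its complement in positive measure contains
a frontier point of the set. -/
lemma exists_frontier_mem_ball_aux {n : ℕ} (S : Set (EuclideanSpace ℝ (Fin n)))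
    (x : EuclideanSpace ℝ (Fin n)) (ρ : ℝ)
    (h1 : 0 < volume (S ∩ ball x ρ)) (h2 : 0 < volume (ball x ρ \ S)) :
    ∃ y ∈ frontier S, y ∈ ball x ρ := by
  by_contra h
  push_neg at h
  have hsub : ball x ρ ⊆ interior S ∪ interior Sᶜ := by
    intro w hw
    by_cases hi : w ∈ interior S
    · exact Or.inl hi
    · right
      rw [interior_compl, mem_compl_iff]
      intro hcl
      exact h w ⟨hcl, hi⟩ hw
  have hdisj : Disjoint (interior S) (interior Sᶜ) := by
    refine Set.disjoint_left.2 fun w hw hw' => ?_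
    exact (interior_subset hw') (interior_subset hw)
  rcases (convex_ball x ρ).isPreconnected.subset_or_subset isOpen_interior isOpen_interior
      hdisj hsub with hl | hr
  · have : ball x ρ \ S = ∅ := by
      refine eq_empty_iff_forall_notMem.2 fun w hw => hw.2 (interior_subset (hl hw.1))
    rw [this, measure_empty] at h2
    exact lt_irrefl _ h2
  · have : S ∩ ball x ρ = ∅ := by
      refine eq_empty_iff_forall_notMem.2 fun w hw => (interior_subset (hr hw.2) : w ∈ Sᶜ) hw.1
    rw [this, measure_empty] at h1
    exact lt_irrefl _ h1

/-- If `D_i ∈ 𝒟_c` and `χ_{D_i} → χ_D` in `L¹`, then the normalized representative of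
`D` (whose boundary points satisfy `0 < |D ∩ B_r(x)| < ωₙ rⁿ` for all `r > 0`) satisfies
`|B_r(x) ∩ D| ≥ c rⁿ` for all `x ∈ ∂D` and `0 < r < diam D`. -/
theorem stmt_10 {n : ℕ} (c : ℝ) (hc : 0 < c)
    (D : ℕ → Set (EuclideanSpace ℝ (Fin n))) (D₀ : Set (EuclideanSpace ℝ (Fin n)))
    (hDm : ∀ i, MeasurableSet (D i)) (hDb : ∀ i, Bornology.IsBounded (D i))
    (hD₀m : MeasurableSet D₀) (hD₀b : Bornology.IsBounded D₀)
    (hdens : ∀ i, ∀ x ∈ frontier (D i), ∀ r : ℝ, 0 < r → r < diam (D i) →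
      ENNReal.ofReal (c * r ^ n) < volume (ball x r ∩ D i))
    (hconv : Tendsto (fun i => volume (symmDiff (D i) D₀)) atTop (nhds 0))
    (hrep : ∀ x ∈ frontier D₀, ∀ r : ℝ, 0 < r →
      0 < volume (D₀ ∩ ball x r) ∧ volume (D₀ ∩ ball x r) < volume (ball x r)) :
    ∀ x ∈ frontier D₀, ∀ r : ℝ, 0 < r → r < diam D₀ →
      ENNReal.ofReal (c * r ^ n) ≤ volume (ball x r ∩ D₀) := by
  -- positive measure near any point of D₀
  have hpos : ∀ y ∈ D₀, ∀ δ : ℝ, 0 < δ → 0 < volume (D₀ ∩ ball y δ) := by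
    intro y hy δ hδ
    by_cases hyi : y ∈ interior D₀
    · obtain ⟨δ', hδ', hsub⟩ := Metric.mem_nhds_iff.1 (mem_interior_iff_mem_nhds.1 hyi)
      calc (0:ℝ≥0∞) < volume (ball y (min δ' δ)) := measure_ball_pos _ _ (lt_min hδ' hδ)
        _ ≤ volume (D₀ ∩ ball y δ) := measure_mono fun w hw =>
            ⟨hsub (ball_subset_ball (min_le_left _ _) hw),
              ball_subset_ball (min_le_right _ _) hw⟩
    · exact (hrep y ⟨subset_closure hy, hyi⟩ δ hδ).1
  intro x hx r hr hrd
  -- key claim for smaller radii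
  have key : ∀ r' ∈ Ioo (0:ℝ) r, ENNReal.ofReal (c * r' ^ n) ≤ volume (ball x r ∩ D₀) := by
    rintro r' ⟨hr'0, hr'r⟩
    refine ENNReal.le_of_forall_pos_le_add fun ε hε hfin => ?_
    -- two far apart points of D₀
    obtain ⟨y, hy, z, hz, hyz⟩ : ∃ y ∈ D₀, ∃ z ∈ D₀, r < dist y z := by
      by_contra hcon
      push_neg at hcon
      exact absurd (diam_le_of_forall_dist_le hr.le hcon) (not_le.2 hrd)
    set δ₁ : ℝ := (dist y z - r) / 3 with hδ₁def
    have hδ₁ : 0 < δ₁ := by simp only [hδ₁def]; linarith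
    set δ₂ : ℝ := (r - r') / 2 with hδ₂def
    have hδ₂ : 0 < δ₂ := by simp only [hδ₂def]; linarith
    have hyp := hpos y hy δ₁ hδ₁
    have hzp := hpos z hz δ₁ hδ₁
    have hxp := (hrep x hx δ₂ hδ₂).1
    have hxc : 0 < volume (ball x δ₂ \ D₀) := by
      rcases eq_zero_or_pos (volume (ball x δ₂ \ D₀)) with h0 | h
      · exfalso
        have : volume (ball x δ₂) ≤ volume (D₀ ∩ ball x δ₂) := by
          calc volume (ball x δ₂) ≤ volume ((D₀ ∩ ball x δ₂) ∪ (ball x δ₂ \ D₀)) :=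
              measure_mono (fun w hw => by
                by_cases hwD : w ∈ D₀
                · exact Or.inl ⟨hwD, hw⟩
                · exact Or.inr ⟨hw, hwD⟩)
            _ ≤ volume (D₀ ∩ ball x δ₂) + volume (ball x δ₂ \ D₀) := measure_union_le _ _
            _ = volume (D₀ ∩ ball x δ₂) := by rw [h0, add_zero]
        exact absurd this (not_le.2 (hrep x hx δ₂ hδ₂).2)
      · exact h
    -- eventually statements
    have E1 := hconv.eventually_lt_const hyp
    have E2 := hconv.eventually_lt_const hzp
    have E3 := hconv.eventually_lt_const hxp
    have E4 := hconv.eventually_lt_const hxc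
    have hεpos : (0:ℝ≥0∞) < (ε : ℝ≥0∞) := by exact_mod_cast hε
    have E5 := hconv.eventually_lt_const hεpos
    obtain ⟨i, ⟨h1, h2⟩, ⟨h3, h4⟩, h5⟩ := ((E1.and E2).and ((E3.and E4).and E5)).exists
    -- generic transfer fact
    have transfer : ∀ (A P Q : Set (EuclideanSpace ℝ (Fin n))), P \ Q ⊆ symmDiff (D i) D₀ →
        volume (A ∩ P) ≤ volume (A ∩ Q) + volume (symmDiff (D i) D₀) := by
      intro A P Q hPQ
      calc volume (A ∩ P) ≤ volume ((A ∩ Q) ∪ (P \ Q)) := measure_mono (fun w hw => by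
            by_cases hwQ : w ∈ Q
            · exact Or.inl ⟨hw.1, hwQ⟩
            · exact Or.inr ⟨hw.2, hwQ⟩)
        _ ≤ volume (A ∩ Q) + volume (P \ Q) := measure_union_le _ _
        _ ≤ volume (A ∩ Q) + volume (symmDiff (D i) D₀) := by
            exact add_le_add_right (measure_mono hPQ) _
    have hsub1 : D₀ \ D i ⊆ symmDiff (D i) D₀ := by
      rw [Set.symmDiff_def]; exact subset_union_right
    have hsub2 : D i \ D₀ ⊆ symmDiff (D i) D₀ := by
      rw [Set.symmDiff_def]; exact subset_union_left
    -- points of D i near y and z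
    have hyi0 : 0 < volume (D i ∩ ball y δ₁) := by
      rcases eq_zero_or_pos (volume (D i ∩ ball y δ₁)) with h0 | h
      · exfalso
        have := transfer (ball y δ₁) D₀ (D i) hsub1
        rw [Set.inter_comm (ball y δ₁) D₀, Set.inter_comm (ball y δ₁) (D i), h0, zero_add] at this
        exact absurd h1 (not_lt.2 this)
      · exact h
    have hzi0 : 0 < volume (D i ∩ ball z δ₁) := by
      rcases eq_zero_or_pos (volume (D i ∩ ball z δ₁)) with h0 | h
      · exfalso
        have := transfer (ball z δ₁) D₀ (D i) hsub1
        rw [Set.inter_comm (ball z δ₁) D₀, Set.inter_comm (ball z δ₁) (D i), h0, zero_add] at this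
        exact absurd h2 (not_lt.2 this)
      · exact h
    obtain ⟨yi, hyiD, hyib⟩ := nonempty_of_measure_ne_zero hyi0.ne'
    obtain ⟨zi, hziD, hzib⟩ := nonempty_of_measure_ne_zero hzi0.ne'
    -- diameter of D i is large
    have hdiam : r' < diam (D i) := by
      have ht : dist y z ≤ dist y yi + dist yi zi + dist zi z := dist_triangle4 y yi zi z
      have h1' : dist y yi < δ₁ := by rw [dist_comm]; exact mem_ball.1 hyib
      have h2' : dist zi z < δ₁ := mem_ball.1 hzib
      have : r' < dist yi zi := by
        have : dist y z - 2 * δ₁ ≤ dist yi zi := by linarith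
        have hr'' : r' < dist y z - 2 * δ₁ := by simp only [hδ₁def] at *; linarith
        linarith
      exact lt_of_lt_of_le this (dist_le_diam_of_mem (hDb i) hyiD hziD)
    -- frontier point of D i near x
    have hxi0 : 0 < volume (D i ∩ ball x δ₂) := by
      rcases eq_zero_or_pos (volume (D i ∩ ball x δ₂)) with h0 | h
      · exfalso
        have := transfer (ball x δ₂) D₀ (D i) hsub1
        rw [Set.inter_comm (ball x δ₂) D₀, Set.inter_comm (ball x δ₂) (D i), h0, zero_add] at this
        exact absurd h3 (not_lt.2 this)
      · exact h
    have hxic : 0 < volume (ball x δ₂ \ D i) := by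
      rcases eq_zero_or_pos (volume (ball x δ₂ \ D i)) with h0 | h
      · exfalso
        have hsubc : ball x δ₂ \ D₀ ⊆ (ball x δ₂ \ D i) ∪ (D i \ D₀) := by
          intro w hw
          by_cases hwi : w ∈ D i
          · exact Or.inr ⟨hwi, hw.2⟩
          · exact Or.inl ⟨hw.1, hwi⟩
        have : volume (ball x δ₂ \ D₀) ≤ volume (symmDiff (D i) D₀) := by
          calc volume (ball x δ₂ \ D₀) ≤ volume ((ball x δ₂ \ D i) ∪ (D i \ D₀)) :=
              measure_mono hsubc
            _ ≤ volume (ball x δ₂ \ D i) + volume (D i \ D₀) := measure_union_le _ _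
            _ = volume (D i \ D₀) := by rw [h0, zero_add]
            _ ≤ volume (symmDiff (D i) D₀) := measure_mono hsub2
        exact absurd h4 (not_lt.2 this)
      · exact h
    obtain ⟨xi, hxifr, hxib⟩ := exists_frontier_mem_ball_aux (D i) x δ₂ hxi0 hxic
    -- the density estimate transfers
    have hballsub : ball xi r' ⊆ ball x r := by
      refine ball_subset_ball' ?_
      have : dist xi x < δ₂ := mem_ball.1 hxib
      simp only [hδ₂def] at this ⊢
      linarith
    calc ENNReal.ofReal (c * r' ^ n) ≤ volume (ball xi r' ∩ D i) :=
        (hdens i xi hxifr r' hr'0 hdiam).le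
      _ ≤ volume (ball x r ∩ D i) := measure_mono (inter_subset_inter_left _ hballsub)
      _ ≤ volume (ball x r ∩ D₀) + volume (symmDiff (D i) D₀) :=
        transfer (ball x r) (D i) D₀ hsub2
      _ ≤ volume (ball x r ∩ D₀) + ε := add_le_add_right h5.le _
  -- pass to the limit r' → r
  have hrIoo : Ioo (0:ℝ) r ∈ 𝓝[<] r := Ioo_mem_nhdsLT_of_mem ⟨hr, le_refl r⟩
  have hcont : Tendsto (fun t : ℝ => ENNReal.ofReal (c * t ^ n)) (𝓝[<] r)
      (𝓝 (ENNReal.ofReal (c * r ^ n))) := by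
    have : Continuous fun t : ℝ => ENNReal.ofReal (c * t ^ n) :=
      ENNReal.continuous_ofReal.comp (by continuity)
    exact (this.tendsto r).mono_left nhdsWithin_le_nhds
  exact le_of_tendsto hcont (eventually_of_mem hrIoo fun t ht => key t ht)
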